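/- Let G be a finite group, α an automorphism of G, and e an integer. Then the number of elements g ∈ G with α(g) = g^e is at most k(G)·|fix(α)|, where k(G) is the number of conjugacy classes of G and fix(α) is the subgroup of fixed points of α. -/

import Mathlib

open Finset

/-- The number of elements `g` with `α g = g ^ e` is at most the number of conjugacy
classes of `G` times the number of fixed points of `α`. -/
theorem stmt_1 {G : Type*} [Group G] [Finite G] (α : G ≃* G) (e : ℤ) :
    Nat.card {g : G | α g = g ^ e} ≤
      Nat.card (ConjClasses G) * Nat.card {g : G | α g = g} := by
  classical
  have : Fintype G := Fintype.ofFinite G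
  have : Fintype (ConjClasses G) := Fintype.ofFinite _
  set S : Finset G := univ.filter (fun g => α g = g ^ e) with hSdef
  set F : Finset G := univ.filter (fun g => α g = g) with hFdef
  have hcardS : Nat.card {g : G | α g = g ^ e} = S.card := by
    simp [Nat.card_eq_fintype_card, Fintype.card_subtype, hSdef]
  have hcardF : Nat.card {g : G | α g = g} = F.card := by
    simp [Nat.card_eq_fintype_card, Fintype.card_subtype, hFdef]
  have key : ∀ a ∈ S.image (ConjClasses.mk),
      (S.filter (fun h => ConjClasses.mk h = a)).card ≤ F.card := by
    intro a ha
    obtain ⟨g0, hg0S, rfl⟩ := mem_image.mp ha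
    have hg0 : α g0 = g0 ^ e := by
      have := (mem_filter.mp hg0S).2; exact this
    set Cg : Finset G := univ.filter (fun c => c * g0 = g0 * c) with hCg
    set Cα : Finset G := univ.filter (fun c => c * α g0 = α g0 * c) with hCα
    set T : Finset G :=
      univ.filter (fun x => x⁻¹ * α x * α g0 = α g0 * (x⁻¹ * α x)) with hT
    set fib := S.filter (fun h => ConjClasses.mk h = ConjClasses.mk g0) with hfib
    have hmemT : ∀ x h : G, x * g0 * x⁻¹ = h → α h = h ^ e → x ∈ T := by
      intro x h hx hh
      have H : α x * α g0 * (α x)⁻¹ = x * α g0 * x⁻¹ := by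
        calc α x * α g0 * (α x)⁻¹ = α (x * g0 * x⁻¹) := by simp [map_mul]
          _ = α h := by rw [hx]
          _ = h ^ e := hh
          _ = (x * g0 * x⁻¹) ^ e := by rw [hx]
          _ = x * g0 ^ e * x⁻¹ := by
              have h2 := map_zpow (MulAut.conj x) g0 e
              simp only [MulAut.conj_apply] at h2; exact h2.symm
          _ = x * α g0 * x⁻¹ := by rw [hg0]
      have H2 := congrArg (fun y => x⁻¹ * y * α x) H
      simp only [mul_assoc, inv_mul_cancel, mul_one, inv_mul_cancel_left] at H2
      simp only [hT, mem_filter, mem_univ, true_and, mul_assoc]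
      simpa [mul_assoc] using H2
    -- step 1 : fib.card * Cg.card ≤ T.card * 1
    have step1 : fib.card * Cg.card ≤ T.card * 1 := by
      apply Finset.card_mul_le_card_mul (fun h x => x * g0 * x⁻¹ = h)
      · intro h hh
        obtain ⟨hhS, hhconj⟩ := mem_filter.mp hh
        have hhe : α h = h ^ e := by
          have := (mem_filter.mp hhS).2; exact this
        obtain ⟨x0, hx0⟩ := isConj_iff.mp (ConjClasses.mk_eq_mk_iff_isConj.mp hhconj.symm)
        have hx0T : x0 ∈ T := hmemT x0 h hx0 hhe
        have h1 : Commute (x0⁻¹ * α x0) (α g0) := by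
          have := mem_filter.mp hx0T; exact this.2
        apply Finset.card_le_card_of_injOn (fun c => x0 * c)
        · intro c hc
          have hcg : c * g0 = g0 * c := (mem_filter.mp hc).2
          rw [Finset.mem_coe, Finset.mem_bipartiteAbove]
          constructor
          · -- x0 * c ∈ T
            have h2 : Commute (α c) (α g0) := by
              have := congrArg α hcg; simpa [map_mul, Commute, SemiconjBy] using this
            have h3 : Commute (c⁻¹) (α g0) := by
              apply Commute.inv_left
              rw [hg0]
              exact Commute.zpow_right hcg e
            have hcomm : Commute ((x0 * c)⁻¹ * α (x0 * c)) (α g0) := by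
              have hrw : (x0 * c)⁻¹ * α (x0 * c) = c⁻¹ * (x0⁻¹ * α x0) * α c := by
                simp [map_mul, mul_assoc]
              rw [hrw]
              exact (h3.mul_left h1).mul_left h2
            simp only [hT, mem_filter, mem_univ, true_and]
            exact hcomm
          · calc x0 * c * g0 * (x0 * c)⁻¹ = x0 * (c * g0 * c⁻¹) * x0⁻¹ := by group
              _ = x0 * g0 * x0⁻¹ := by rw [hcg]; group
              _ = h := hx0
        · intro a _ b _ hab
          exact mul_left_cancel hab
      · intro x hx
        apply Finset.card_le_one.mpr
        intro a ha b hb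
        rw [Finset.mem_bipartiteBelow] at ha hb
        rw [← ha.2, ← hb.2]
    -- step 2 : T.card * 1 ≤ Cα.card * F.card
    have step2 : T.card * 1 ≤ Cα.card * F.card := by
      apply Finset.card_mul_le_card_mul (fun x c => x⁻¹ * α x = c)
      · intro x hx
        rw [Nat.one_le_iff_ne_zero, ← Nat.pos_iff_ne_zero, Finset.card_pos]
        refine ⟨x⁻¹ * α x, ?_⟩
        rw [Finset.mem_bipartiteAbove]
        refine ⟨?_, rfl⟩
        simp only [hCα, mem_filter, mem_univ, true_and]
        have := (mem_filter.mp hx).2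
        exact this
      · intro c hc
        rcases (T.bipartiteBelow (fun x c => x⁻¹ * α x = c) c).eq_empty_or_nonempty with
          hE | ⟨x0, hx0⟩
        · simp [hE]
        · rw [Finset.mem_bipartiteBelow] at hx0
          have hx0c : α x0 = x0 * c := by
            have := hx0.2
            rw [← this]; group
          apply Finset.card_le_card_of_injOn (fun x => x * x0⁻¹)
          · intro x hxmem
            rw [Finset.mem_coe, Finset.mem_bipartiteBelow] at hxmem
            have hxc : α x = x * c := by
              have := hxmem.2
              rw [← this]; group
            simp only [Finset.mem_coe, hFdef, mem_filter, mem_univ, true_and]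
            rw [map_mul, map_inv, hxc, hx0c]
            group
          · intro a _ b _ hab
            exact mul_right_cancel hab
    -- step 3 : Cα.card = Cg.card
    have step3 : Cα.card = Cg.card := by
      apply Finset.card_bij (fun c _ => α.symm c)
      · intro c hc
        have hcc : c * α g0 = α g0 * c := (mem_filter.mp hc).2
        simp only [hCg, mem_filter, mem_univ, true_and]
        have := congrArg α.symm hcc
        simpa [map_mul] using this
      · intro a _ b _ hab
        exact α.symm.injective hab
      · intro c hc
        refine ⟨α c, ?_, by simp⟩
        have hcc : c * g0 = g0 * c := (mem_filter.mp hc).2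
        simp only [hCα, mem_filter, mem_univ, true_and]
        have := congrArg α hcc
        simpa [map_mul] using this
    have hCgpos : 0 < Cg.card := by
      rw [Finset.card_pos]
      exact ⟨1, by simp [hCg]⟩
    have : fib.card * Cg.card ≤ F.card * Cg.card := by
      calc fib.card * Cg.card ≤ T.card * 1 := step1
        _ ≤ Cα.card * F.card := step2
        _ = F.card * Cg.card := by rw [step3, mul_comm]
    exact Nat.le_of_mul_le_mul_right this hCgpos
  have main : S.card ≤ F.card * (S.image ConjClasses.mk).card :=
    Finset.card_le_mul_card_image S F.card key
  have himg : (S.image ConjClasses.mk).card ≤ Fintype.card (ConjClasses G) :=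
    Finset.card_le_univ _
  rw [hcardS, hcardF, Nat.card_eq_fintype_card]
  calc S.card ≤ F.card * (S.image ConjClasses.mk).card := main
    _ ≤ F.card * Fintype.card (ConjClasses G) := Nat.mul_le_mul_left _ himg
    _ = Fintype.card (ConjClasses G) * F.card := mul_comm _ _
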